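/- Let k ≥ 2 be an integer and let ε ∈ [0, 1−1/k²] and q ∈ [0,1] be real numbers. If 1−ε ≤ (√(q/k²) + √((1−q)(1−1/k²)))², then q ≤ ε + (1−2ε)/k² + 2√((k²−1)ε(1−ε))/k². -/

import Mathlib

private lemma q_upper_bound_aux (K e q S T : ℝ) (hK4 : 4 ≤ K) (he0 : 0 ≤ e)
    (hKe : K * e ≤ K - 1) (hq0 : 0 ≤ q) (hq1 : q ≤ 1) (hS0 : 0 ≤ S) (hT0 : 0 ≤ T)
    (hS2 : S ^ 2 = (K - 1) * q * (1 - q)) (hT2 : T ^ 2 = (K - 1) * e * (1 - e))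
    (hA : 1 - K * e + (K - 2) * q ≤ 2 * S) :
    K * q - (K - 2) * e - 1 ≤ 2 * T := by
  by_cases hB : K * q - (K - 2) * e - 1 ≤ 0
  · linarith
  · push_neg at hB
    have hAsq : (1 - K * e + (K - 2) * q) ^ 2 ≤ 4 * ((K - 1) * q * (1 - q)) := by
      rcases le_or_gt 0 (1 - K * e + (K - 2) * q) with hA0 | hA0
      · have h1 : (1 - K * e + (K - 2) * q) ^ 2 ≤ (2 * S) ^ 2 := by
          apply pow_le_pow_left₀ hA0 hA
        nlinarith [h1, hS2]
      · have h1 : -(1 - K * e + (K - 2) * q) ≤ (K - 2) * (1 - q) := by nlinarith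
        have h2 : (K - 2) * (-(1 - K * e + (K - 2) * q)) ≤ 2 * (K - 1) * (2 * q - 1) := by
          nlinarith [mul_lt_mul_of_pos_left hB (by linarith : (0:ℝ) < K)]
        have hq2 : 1 / 2 < q := by nlinarith
        have hprod : (-(1 - K * e + (K - 2) * q)) * ((K - 2) * (-(1 - K * e + (K - 2) * q)))
            ≤ ((K - 2) * (1 - q)) * (2 * (K - 1) * (2 * q - 1)) :=
          mul_le_mul h1 h2 (by nlinarith) (by nlinarith)
        nlinarith [hprod, hq1, hq2, hK4]
    have hid : (K * q - (K - 2) * e - 1) ^ 2 - 4 * ((K - 1) * e * (1 - e))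
        = (1 - K * e + (K - 2) * q) ^ 2 - 4 * ((K - 1) * q * (1 - q)) := by ring
    have hBsq : (K * q - (K - 2) * e - 1) ^ 2 ≤ 4 * T ^ 2 := by nlinarith [hid, hAsq, hT2]
    nlinarith [hBsq, hT0, sq_nonneg (K * q - (K - 2) * e - 1 - 2 * T)]

/-- Let `k ≥ 2`, `ε ∈ [0, 1−1/k²]`, `q ∈ [0,1]`.
If `1−ε ≤ (√(q/k²) + √((1−q)(1−1/k²)))²`, then
`q ≤ ε + (1−2ε)/k² + 2√((k²−1)ε(1−ε))/k²`. -/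
theorem q_upper_bound (k : ℕ) (hk : 2 ≤ k) (ε q : ℝ)
    (hε0 : 0 ≤ ε) (hε1 : ε ≤ 1 - 1 / (k : ℝ) ^ 2)
    (hq0 : 0 ≤ q) (hq1 : q ≤ 1)
    (h : 1 - ε ≤ (Real.sqrt (q / (k : ℝ) ^ 2)
        + Real.sqrt ((1 - q) * (1 - 1 / (k : ℝ) ^ 2))) ^ 2) :
    q ≤ ε + (1 - 2 * ε) / (k : ℝ) ^ 2
        + 2 * Real.sqrt (((k : ℝ) ^ 2 - 1) * ε * (1 - ε)) / (k : ℝ) ^ 2 := by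
  have hk2 : (2:ℝ) ≤ (k:ℝ) := by exact_mod_cast hk
  have hK4 : (4:ℝ) ≤ (k:ℝ) ^ 2 := by nlinarith
  have hK0 : (0:ℝ) < (k:ℝ) ^ 2 := by linarith
  have hq1' : (0:ℝ) ≤ 1 - q := by linarith
  have hKe : (k:ℝ) ^ 2 * ε ≤ (k:ℝ) ^ 2 - 1 := by
    have h1 : ε * (k:ℝ) ^ 2 ≤ (1 - 1 / (k:ℝ) ^ 2) * (k:ℝ) ^ 2 :=
      mul_le_mul_of_nonneg_right hε1 hK0.le
    have h2 : (1 - 1 / (k:ℝ) ^ 2) * (k:ℝ) ^ 2 = (k:ℝ) ^ 2 - 1 := by field_simp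
    nlinarith
  have hε1' : ε ≤ 1 := by nlinarith
  have hS0 : 0 ≤ Real.sqrt (((k:ℝ) ^ 2 - 1) * q * (1 - q)) := Real.sqrt_nonneg _
  have hT0 : 0 ≤ Real.sqrt (((k:ℝ) ^ 2 - 1) * ε * (1 - ε)) := Real.sqrt_nonneg _
  have hS2 : (Real.sqrt (((k:ℝ) ^ 2 - 1) * q * (1 - q))) ^ 2 = ((k:ℝ) ^ 2 - 1) * q * (1 - q) :=
    Real.sq_sqrt (mul_nonneg (mul_nonneg (by linarith) hq0) hq1')
  have hT2 : (Real.sqrt (((k:ℝ) ^ 2 - 1) * ε * (1 - ε))) ^ 2 = ((k:ℝ) ^ 2 - 1) * ε * (1 - ε) :=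
    Real.sq_sqrt (mul_nonneg (mul_nonneg (by linarith) hε0) (by linarith))
  have ha : (0:ℝ) ≤ q / (k:ℝ) ^ 2 := by positivity
  have h1k : (0:ℝ) ≤ 1 - 1 / (k:ℝ) ^ 2 := by linarith
  have hb : (0:ℝ) ≤ (1 - q) * (1 - 1 / (k:ℝ) ^ 2) := mul_nonneg hq1' h1k
  have e : (Real.sqrt (q / (k:ℝ) ^ 2) + Real.sqrt ((1 - q) * (1 - 1 / (k:ℝ) ^ 2))) ^ 2
      = q / (k:ℝ) ^ 2 + (1 - q) * (1 - 1 / (k:ℝ) ^ 2)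
        + 2 * (Real.sqrt (((k:ℝ) ^ 2 - 1) * q * (1 - q)) / (k:ℝ) ^ 2) := by
    have h1 : Real.sqrt (q / (k:ℝ) ^ 2) * Real.sqrt ((1 - q) * (1 - 1 / (k:ℝ) ^ 2))
        = Real.sqrt ((q / (k:ℝ) ^ 2) * ((1 - q) * (1 - 1 / (k:ℝ) ^ 2))) :=
      (Real.sqrt_mul ha _).symm
    have h2 : (q / (k:ℝ) ^ 2) * ((1 - q) * (1 - 1 / (k:ℝ) ^ 2))
        = (((k:ℝ) ^ 2 - 1) * q * (1 - q)) / ((k:ℝ) ^ 2) ^ 2 := by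
      field_simp
    have h3 : Real.sqrt ((((k:ℝ) ^ 2 - 1) * q * (1 - q)) / ((k:ℝ) ^ 2) ^ 2)
        = Real.sqrt (((k:ℝ) ^ 2 - 1) * q * (1 - q)) / (k:ℝ) ^ 2 := by
      rw [Real.sqrt_div (mul_nonneg (mul_nonneg (by linarith) hq0) hq1') (((k:ℝ) ^ 2) ^ 2),
        Real.sqrt_sq hK0.le]
    rw [add_sq, Real.sq_sqrt ha, Real.sq_sqrt hb, mul_assoc, h1, h2, h3]
    ring
  rw [e] at h
  have hA : 1 - (k:ℝ) ^ 2 * ε + ((k:ℝ) ^ 2 - 2) * q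
      ≤ 2 * Real.sqrt (((k:ℝ) ^ 2 - 1) * q * (1 - q)) := by
    have h' := mul_le_mul_of_nonneg_left h hK0.le
    have e2 : (k:ℝ) ^ 2 * (q / (k:ℝ) ^ 2 + (1 - q) * (1 - 1 / (k:ℝ) ^ 2)
          + 2 * (Real.sqrt (((k:ℝ) ^ 2 - 1) * q * (1 - q)) / (k:ℝ) ^ 2))
        = q + (1 - q) * ((k:ℝ) ^ 2 - 1) + 2 * Real.sqrt (((k:ℝ) ^ 2 - 1) * q * (1 - q)) := by
      field_simp
    rw [e2] at h'
    nlinarith [h']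
  have hB := q_upper_bound_aux ((k:ℝ) ^ 2) ε q
    (Real.sqrt (((k:ℝ) ^ 2 - 1) * q * (1 - q))) (Real.sqrt (((k:ℝ) ^ 2 - 1) * ε * (1 - ε)))
    hK4 hε0 hKe hq0 hq1 hS0 hT0 hS2 hT2 hA
  rw [show ε + (1 - 2 * ε) / (k:ℝ) ^ 2 + 2 * Real.sqrt (((k:ℝ) ^ 2 - 1) * ε * (1 - ε)) / (k:ℝ) ^ 2
      = ((k:ℝ) ^ 2 * ε + (1 - 2 * ε) + 2 * Real.sqrt (((k:ℝ) ^ 2 - 1) * ε * (1 - ε))) / (k:ℝ) ^ 2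
    from by field_simp, le_div_iff₀ hK0]
  nlinarith [hB]
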